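/- Let B₃ = {(0,0),(1,0)} and W₃ = {(0,1),(1,1)} in ℝ². Then for every v ∈ ℝ, (−h(B₃ ⊕ W̌₃, u_v))⁺ = (sin v − |cos v|)⁺, and ∫₀^{2π} (−h(B₃ ⊕ W̌₃, u_v))⁺ dv = 2√2 − 2. -/

import Mathlib

open Pointwise MeasureTheory

noncomputable section

/-- The plane `ℝ²`. -/
abbrev E2 := EuclideanSpace ℝ (Fin 2)

/-- The point `(x, y)` of `ℝ²`. -/
def pt (x y : ℝ) : E2 := (WithLp.equiv 2 (Fin 2 → ℝ)).symm ![x, y]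

/-- The support function `h(A, n) = sup_{y ∈ A} ⟨y, n⟩`. -/
def suppFn (A : Set E2) (n : E2) : ℝ := sSup ((fun y => (inner ℝ y n : ℝ)) '' A)

/-- The unit vector `u_v = (cos v, sin v)`. -/
def uv (v : ℝ) : E2 := pt (Real.cos v) (Real.sin v)

/-- Black pixels of the configuration `ξ₃` (class `η₃`). -/
def B3 : Set E2 := {pt 0 0, pt 1 0}

/-- White pixels of the configuration `ξ₃`. -/
def W3 : Set E2 := {pt 0 1, pt 1 1}


namespace Stmt10Aux

lemma pt_add (a b c d : ℝ) : pt a b + pt c d = pt (a+c) (b+d) := by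
  ext i; fin_cases i <;> simp [pt]

lemma pt_neg (a b : ℝ) : -pt a b = pt (-a) (-b) := by
  ext i; fin_cases i <;> simp [pt]

lemma inner_pt (a b c d : ℝ) : (inner ℝ (pt a b) (pt c d) : ℝ) = a*c + b*d := by
  simp [pt, PiLp.inner_apply, Fin.sum_univ_two]; ring

lemma pt_inj {a b c d : ℝ} : pt a b = pt c d ↔ a = c ∧ b = d := by
  constructor
  · intro h
    have h0 := congrFun (congrArg (WithLp.equiv 2 (Fin 2 → ℝ)) h) 0
    have h1 := congrFun (congrArg (WithLp.equiv 2 (Fin 2 → ℝ)) h) 1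
    simp [pt] at h0 h1
    exact ⟨h0, h1⟩
  · rintro ⟨rfl, rfl⟩; rfl

lemma set_eq : B3 + -W3 = ({pt 0 (-1), pt (-1) (-1), pt 1 (-1)} : Set E2) := by
  ext x
  simp only [B3, W3, Set.mem_add, Set.mem_neg, Set.mem_insert_iff, Set.mem_singleton_iff]
  constructor
  · rintro ⟨a, ha, b, hb, rfl⟩
    rcases ha with rfl | rfl <;> rcases hb with hb | hb <;>
      · rw [← neg_neg b, hb, pt_neg, pt_add]
        norm_num [pt_inj]
  · rintro (rfl | rfl | rfl)
    · exact ⟨pt 0 0, Or.inl rfl, pt 0 (-1), Or.inl (by rw [pt_neg]; norm_num),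
        by rw [pt_add]; norm_num⟩
    · exact ⟨pt 0 0, Or.inl rfl, pt (-1) (-1), Or.inr (by rw [pt_neg]; norm_num),
        by rw [pt_add]; norm_num⟩
    · exact ⟨pt 1 0, Or.inr rfl, pt 0 (-1), Or.inl (by rw [pt_neg]; norm_num),
        by rw [pt_add]; norm_num⟩

lemma supp_eq (v : ℝ) : suppFn (B3 + -W3) (uv v) = |Real.cos v| - Real.sin v := by
  rw [suppFn, set_eq]
  rw [Set.image_insert_eq, Set.image_insert_eq, Set.image_singleton, uv,
    inner_pt, inner_pt, inner_pt]
  rw [csSup_insert (((Set.finite_singleton _).insert _).bddAbove) (by simp), csSup_pair]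
  set s := Real.sin v
  set co := Real.cos v
  rcases abs_cases co with ⟨h1, h2⟩ | ⟨h1, h2⟩
  · rw [
      max_eq_right (show -1*co + -1*s ≤ 1*co + -1*s by linarith),
      max_eq_right (show 0*co + -1*s ≤ 1*co + -1*s by linarith), h1]
    ring
  · rw [
      max_eq_left (show 1*co + -1*s ≤ -1*co + -1*s by linarith),
      max_eq_right (show 0*co + -1*s ≤ -1*co + -1*s by linarith), h1]
    ring

lemma cos_three_pi_div_four : Real.cos (3*Real.pi/4) = -(Real.sqrt 2 / 2) := by
  rw [show (3*Real.pi/4 : ℝ) = Real.pi - Real.pi/4 by ring, Real.cos_pi_sub,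
    Real.cos_pi_div_four]

lemma sin_three_pi_div_four : Real.sin (3*Real.pi/4) = Real.sqrt 2 / 2 := by
  rw [show (3*Real.pi/4 : ℝ) = Real.pi - Real.pi/4 by ring, Real.sin_pi_sub,
    Real.sin_pi_div_four]

lemma integral_g :
    ∫ v in (0 : ℝ)..(2 * Real.pi), max (Real.sin v - |Real.cos v|) 0 =
      2 * Real.sqrt 2 - 2 := by
  have hpi := Real.pi_pos
  set g : ℝ → ℝ := fun v => max (Real.sin v - |Real.cos v|) 0 with hg
  have hcont : Continuous g := (Real.continuous_sin.sub Real.continuous_cos.abs).max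
    continuous_const
  have hint : ∀ a b : ℝ, IntervalIntegrable g volume a b := fun a b =>
    hcont.intervalIntegrable a b
  have IA : ∫ v in (0:ℝ)..(Real.pi/4), g v = 0 := by
    have h0 : Set.EqOn g 0 (Set.uIcc 0 (Real.pi/4)) := by
      intro v hv
      rw [Set.uIcc_of_le (by linarith)] at hv
      obtain ⟨hv0, hv1⟩ := hv
      have h1 : Real.sin v ≤ Real.cos v := by
        calc Real.sin v ≤ Real.sin (Real.pi/4) :=
              Real.sin_le_sin_of_le_of_le_pi_div_two (by linarith) (by linarith) hv1
          _ = Real.cos (Real.pi/4) := by rw [Real.sin_pi_div_four, Real.cos_pi_div_four]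
          _ ≤ Real.cos v := Real.cos_le_cos_of_nonneg_of_le_pi hv0 (by linarith) hv1
      have h2 := le_abs_self (Real.cos v)
      simp only [hg, Pi.zero_apply]
      exact max_eq_right (by linarith)
    rw [intervalIntegral.integral_congr h0]
    simp
  have IB : ∫ v in (Real.pi/4)..(Real.pi/2), g v = Real.sqrt 2 - 1 := by
    have h0 : Set.EqOn g (fun v => Real.sin v - Real.cos v)
        (Set.uIcc (Real.pi/4) (Real.pi/2)) := by
      intro v hv
      rw [Set.uIcc_of_le (by linarith)] at hv
      obtain ⟨hv0, hv1⟩ := hv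
      have hc0 : 0 ≤ Real.cos v := Real.cos_nonneg_of_mem_Icc ⟨by linarith, hv1⟩
      have h1 : Real.cos v ≤ Real.sin v := by
        calc Real.cos v ≤ Real.cos (Real.pi/4) :=
              Real.cos_le_cos_of_nonneg_of_le_pi (by linarith) (by linarith) hv0
          _ = Real.sin (Real.pi/4) := by rw [Real.sin_pi_div_four, Real.cos_pi_div_four]
          _ ≤ Real.sin v :=
              Real.sin_le_sin_of_le_of_le_pi_div_two (by linarith) hv1 hv0
      simp only [hg]
      rw [abs_of_nonneg hc0]
      exact max_eq_left (by linarith)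
    rw [intervalIntegral.integral_congr h0,
      intervalIntegral.integral_sub (Real.continuous_sin.intervalIntegrable _ _)
        (Real.continuous_cos.intervalIntegrable _ _),
      integral_sin, integral_cos, Real.cos_pi_div_four, Real.cos_pi_div_two,
      Real.sin_pi_div_two, Real.sin_pi_div_four]
    ring
  have IC : ∫ v in (Real.pi/2)..(3*Real.pi/4), g v = Real.sqrt 2 - 1 := by
    have h0 : Set.EqOn g (fun v => Real.sin v + Real.cos v)
        (Set.uIcc (Real.pi/2) (3*Real.pi/4)) := by
      intro v hv
      rw [Set.uIcc_of_le (by linarith)] at hv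
      obtain ⟨hv0, hv1⟩ := hv
      have hc0 : Real.cos v ≤ 0 :=
        Real.cos_nonpos_of_pi_div_two_le_of_le hv0 (by linarith)
      have h1 : -Real.cos v ≤ Real.sin v := by
        have e1 : Real.sin v = Real.cos (v - Real.pi/2) :=
          (Real.cos_sub_pi_div_two v).symm
        have e2 : -Real.cos v = Real.cos (Real.pi - v) := by rw [Real.cos_pi_sub]
        rw [e1, e2]
        calc Real.cos (Real.pi - v) ≤ Real.cos (Real.pi/4) :=
              Real.cos_le_cos_of_nonneg_of_le_pi (by linarith) (by linarith) (by linarith)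
          _ ≤ Real.cos (v - Real.pi/2) :=
              Real.cos_le_cos_of_nonneg_of_le_pi (by linarith) (by linarith) (by linarith)
      simp only [hg]
      rw [abs_of_nonpos hc0, sub_neg_eq_add]
      exact max_eq_left (by linarith)
    rw [intervalIntegral.integral_congr h0,
      intervalIntegral.integral_add (Real.continuous_sin.intervalIntegrable _ _)
        (Real.continuous_cos.intervalIntegrable _ _),
      integral_sin, integral_cos, cos_three_pi_div_four, sin_three_pi_div_four,
      Real.cos_pi_div_two, Real.sin_pi_div_two]
    ring
  have ID : ∫ v in (3*Real.pi/4)..(2*Real.pi), g v = 0 := by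
    have h0 : Set.EqOn g 0 (Set.uIcc (3*Real.pi/4) (2*Real.pi)) := by
      intro v hv
      rw [Set.uIcc_of_le (by linarith)] at hv
      obtain ⟨hv0, hv1⟩ := hv
      have key : Real.sin v ≤ |Real.cos v| := by
        rcases le_total v Real.pi with hle | hge
        · have e1 : Real.sin v = Real.cos (v - Real.pi/2) :=
            (Real.cos_sub_pi_div_two v).symm
          have e2 : -Real.cos v = Real.cos (Real.pi - v) := by rw [Real.cos_pi_sub]
          have h1 : Real.cos (v - Real.pi/2) ≤ Real.cos (Real.pi/4) :=
            Real.cos_le_cos_of_nonneg_of_le_pi (by linarith) (by linarith) (by linarith)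
          have h2 : Real.cos (Real.pi/4) ≤ Real.cos (Real.pi - v) :=
            Real.cos_le_cos_of_nonneg_of_le_pi (by linarith) (by linarith) (by linarith)
          have h3 : -Real.cos v ≤ |Real.cos v| := neg_le_abs _
          rw [e1]
          linarith [e2 ▸ h2]
        · have h1 : 0 ≤ Real.sin (v - Real.pi) :=
            Real.sin_nonneg_of_nonneg_of_le_pi (by linarith) (by linarith)
          rw [Real.sin_sub_pi] at h1
          have h2 : (0:ℝ) ≤ |Real.cos v| := abs_nonneg _
          linarith
      simp only [hg, Pi.zero_apply]
      exact max_eq_right (by linarith)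
    rw [intervalIntegral.integral_congr h0]
    simp
  have split : ∫ v in (0:ℝ)..(2*Real.pi), g v =
      (((∫ v in (0:ℝ)..(Real.pi/4), g v) + ∫ v in (Real.pi/4)..(Real.pi/2), g v) +
        ∫ v in (Real.pi/2)..(3*Real.pi/4), g v) + ∫ v in (3*Real.pi/4)..(2*Real.pi), g v := by
    rw [intervalIntegral.integral_add_adjacent_intervals (hint _ _) (hint _ _),
      intervalIntegral.integral_add_adjacent_intervals (hint _ _) (hint _ _),
      intervalIntegral.integral_add_adjacent_intervals (hint _ _) (hint _ _)]
  rw [split, IA, IB, IC, ID]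
  ring

end Stmt10Aux

/-- From the proof of Theorem 3: `(−h(B₃ ⊕ W̌₃, u_v))⁺ = (sin v − |cos v|)⁺` for all `v`,
and its integral over `[0, 2π]` equals `2√2 − 2`. -/
theorem stmt_10 :
    (∀ v : ℝ, max (-(suppFn (B3 + -W3) (uv v))) 0 = max (Real.sin v - |Real.cos v|) 0) ∧
      ∫ v in (0 : ℝ)..(2 * Real.pi), max (-(suppFn (B3 + -W3) (uv v))) 0 =
        2 * Real.sqrt 2 - 2 := by
  constructor
  · intro v
    rw [Stmt10Aux.supp_eq, neg_sub]
  · simp only [Stmt10Aux.supp_eq, neg_sub]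
    exact Stmt10Aux.integral_g

end
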